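/- arXiv:2211.03104 — 7 statements merged into one kernel-verified Lean document; each statement's English description precedes it below -/
import Mathlib

section
/- Let C and D be small categories with C having finite colimits, let G : C ⥤ D preserve finite colimits, let E and E' be categories with colimits of small filtered diagrams, and let ι : E ⥤ E' be a fully faithful functor preserving filtered colimits. Then for every functor H : C ⥤ E and every object d : D, the value at d of the pointwise left Kan extension Lan_G(H ⋙ ι) lies in the essential image of ι; consequently Lan_G(H ⋙ ι) factors through E up to natural isomorphism, as ι ∘ (Lan_G H) ≅ Lan_G(H ⋙ ι). -/
open CategoryTheory Limits

universe u

/-- Let `G : C ⥤ D` preserve finite colimits, `C` small with finite colimits, and let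
`ι : E ⥤ E'` be a fully faithful functor preserving filtered colimits between
categories with filtered colimits.  If `(L, α)` is a pointwise left Kan extension of
`H : C ⥤ E` along `G` and `(L', α')` is a pointwise left Kan extension of `H ⋙ ι`
along `G`, then every value of `L'` lies in the essential image of `ι`, and
consequently `L ⋙ ι ≅ L'`. -/
theorem stmt3 {C D : Type u} [SmallCategory C] [SmallCategory D]
    [HasFiniteColimits C] (G : C ⥤ D) [PreservesFiniteColimits G]
    {E : Type*} [Category E] [HasFilteredColimitsOfSize.{u, u} E]
    {E' : Type*} [Category E'] [HasFilteredColimitsOfSize.{u, u} E']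
    (ι : E ⥤ E') [ι.Full] [ι.Faithful] [PreservesFilteredColimitsOfSize.{u, u} ι]
    (H : C ⥤ E)
    (L : D ⥤ E) (α : H ⟶ G ⋙ L)
    (hL : (Functor.LeftExtension.mk L α).IsPointwiseLeftKanExtension)
    (L' : D ⥤ E') (α' : H ⋙ ι ⟶ G ⋙ L')
    (hL' : (Functor.LeftExtension.mk L' α').IsPointwiseLeftKanExtension) :
    (∀ d : D, ι.essImage (L'.obj d)) ∧ Nonempty (L ⋙ ι ≅ L') := by
  have hfil : ∀ d : D, IsFiltered (CostructuredArrow G d) := fun d => by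
    have : HasFiniteColimits (CostructuredArrow G d) :=
      ⟨fun J _ _ => CostructuredArrow.hasColimitsOfShape⟩
    exact IsFiltered.of_hasFiniteColimits _
  let β : H ⋙ ι ⟶ G ⋙ (L ⋙ ι) := Functor.whiskerRight α ι
  have hE₂ : (Functor.LeftExtension.mk (L ⋙ ι) β).IsPointwiseLeftKanExtension := fun d => by
    have := hfil d
    exact IsColimit.ofIsoColimit (isColimitOfPreserves ι (hL d))
      (Cocones.ext (Iso.refl _) (by intro j; simp [β]; exact (Category.comp_id _).trans (ι.map_comp _ _)))
  let e : Functor.LeftExtension.mk (L ⋙ ι) β ≅ Functor.LeftExtension.mk L' α' :=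
    hE₂.isUniversal.uniqueUpToIso hL'.isUniversal
  let e' : L ⋙ ι ≅ L' := (StructuredArrow.proj _ _).mapIso e
  exact ⟨fun d => ⟨L.obj d, ⟨e'.app d⟩⟩, ⟨e'⟩⟩
end

section
/- Let A and B be frames and let p : B → A be a surjective frame homomorphism whose right adjoint r : A → B (characterized by the Galois connection p b ≤ a ↔ b ≤ r a) preserves finite joins, i.e. r ⊥ = ⊥ and r (a ⊔ a') = r a ⊔ r a' for all a, a' in A. Let K be a coherent frame: its top element is compact, the meet of any two compact elements of K is compact, and every element of K is the supremum of the compact elements below it. Then every frame homomorphism f : K → A lifts along p: there exists a frame homomorphism g : K → B with p ∘ g = f. (Joyal's lemma: coherent locales are injective with respect to flat embeddings of locales.) -/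
/-- The December 2024 Mathlib definition of a compact element of a complete lattice. -/
def CompleteLattice.IsCompactElement {α : Type*} [CompleteLattice α] (k : α) :=
  ∀ s : Set α, k ≤ sSup s → ∃ t : Finset α, ↑t ⊆ s ∧ k ≤ t.sup id

open CompleteLattice


/-- Joyal's lemma: coherent frames are injective with respect to flat surjections of
frames.  If `p : B → A` is a surjective frame homomorphism whose right adjoint `r`
preserves finite joins, and `K` is a coherent frame (compact top, compact elements
closed under binary meets, every element a supremum of compact elements below it),
then every frame homomorphism `f : K → A` lifts along `p`. -/
theorem stmt4 {A B K : Type*} [Order.Frame A] [Order.Frame B] [Order.Frame K]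
    (p : FrameHom B A) (hp : Function.Surjective p)
    (r : A → B) (hgc : GaloisConnection p r)
    (hr_bot : r ⊥ = ⊥) (hr_sup : ∀ a a' : A, r (a ⊔ a') = r a ⊔ r a')
    (htop : CompleteLattice.IsCompactElement (⊤ : K))
    (hinf : ∀ k k' : K, CompleteLattice.IsCompactElement k →
      CompleteLattice.IsCompactElement k' → CompleteLattice.IsCompactElement (k ⊓ k'))
    (hgen : ∀ u : K, u = sSup {k | CompleteLattice.IsCompactElement k ∧ k ≤ u})
    (f : FrameHom K A) :
    ∃ g : FrameHom K B, ∀ u : K, p (g u) = f u := by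
  classical
  -- p ∘ r = id
  have pr : ∀ a, p (r a) = a := by
    intro a
    obtain ⟨b, hb⟩ := hp a
    have h1 : p b ≤ p (r (p b)) := hgc.monotone_l (hgc.le_u_l b)
    rw [hb] at h1
    exact le_antisymm (hgc.l_u_le a) h1
  have hbot : CompleteLattice.IsCompactElement (⊥ : K) := by
    intro s _
    exact ⟨∅, by simp, by simp⟩
  have hcsup : ∀ k k' : K, CompleteLattice.IsCompactElement k → CompleteLattice.IsCompactElement k' →
      CompleteLattice.IsCompactElement (k ⊔ k') := by
    intro k k' hk hk' s hs
    obtain ⟨t, ht, hkt⟩ := hk s (le_trans le_sup_left hs)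
    obtain ⟨t', ht', hkt'⟩ := hk' s (le_trans le_sup_right hs)
    refine ⟨t ∪ t', by simp [Set.union_subset_iff, ht, ht'], ?_⟩
    rw [Finset.sup_union]
    exact sup_le_sup hkt hkt'
  set S : K → Set K := fun u => {k | CompleteLattice.IsCompactElement k ∧ k ≤ u} with hS
  set G : K → B := fun u => ⨆ k ∈ S u, r (f k) with hG
  have hle : ∀ u, ∀ k ∈ S u, r (f k) ≤ G u := by
    intro u k hk
    exact le_iSup₂ (f := fun k _ => r (f k)) k hk
  have Gmono : Monotone G := by
    intro u v huv
    refine iSup₂_le fun k hk => hle v k ⟨hk.1, hk.2.trans huv⟩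
  have Gbot : G ⊥ = ⊥ := by
    refine le_bot_iff.mp (iSup₂_le fun k hk => ?_)
    have : k = ⊥ := le_bot_iff.mp hk.2
    simp [this, hr_bot]
  have Gsup2 : ∀ u v : K, G (u ⊔ v) = G u ⊔ G v := by
    intro u v
    refine le_antisymm ?_ (sup_le (Gmono le_sup_left) (Gmono le_sup_right))
    refine iSup₂_le fun k hk => ?_
    set T : Set K := {x | ∃ a ∈ S u, ∃ b ∈ S v, x = a ⊔ b} with hT
    have hTne : T.Nonempty := ⟨⊥ ⊔ ⊥, ⊥, ⟨hbot, bot_le⟩, ⊥, ⟨hbot, bot_le⟩, rfl⟩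
    have hTdir : DirectedOn (· ≤ ·) T := by
      rintro _ ⟨a, ha, b, hb, rfl⟩ _ ⟨a', ha', b', hb', rfl⟩
      refine ⟨(a ⊔ a') ⊔ (b ⊔ b'),
        ⟨a ⊔ a', ⟨hcsup _ _ ha.1 ha'.1, sup_le ha.2 ha'.2⟩,
         b ⊔ b', ⟨hcsup _ _ hb.1 hb'.1, sup_le hb.2 hb'.2⟩, rfl⟩, ?_, ?_⟩
      · exact sup_le_sup le_sup_left le_sup_left
      · exact sup_le_sup le_sup_right le_sup_right
    have hTsup : u ⊔ v ≤ sSup T := by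
      have h1 : u ≤ sSup T := by
        conv_lhs => rw [hgen u]
        refine sSup_le fun a ha => le_sSup_of_le ⟨a, ha, ⊥, ⟨hbot, bot_le⟩, rfl⟩ le_sup_left
      have h2 : v ≤ sSup T := by
        conv_lhs => rw [hgen v]
        refine sSup_le fun b hb => le_sSup_of_le ⟨⊥, ⟨hbot, bot_le⟩, b, hb, rfl⟩ le_sup_right
      exact sup_le h1 h2
    obtain ⟨x, hxT, hkx⟩ :=
      (isCompactElement_iff_le_of_directed_sSup_le K k).mp
        ((isCompactElement_iff_exists_le_sSup_of_le_sSup K k).mpr hk.1) T hTne hTdir (hk.2.trans hTsup)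
    obtain ⟨a, ha, b, hb, rfl⟩ := hxT
    calc r (f k) ≤ r (f (a ⊔ b)) := hgc.monotone_u (OrderHomClass.mono f hkx)
      _ = r (f a) ⊔ r (f b) := by rw [map_sup]; exact hr_sup _ _
      _ ≤ G u ⊔ G v := sup_le_sup (hle u a ha) (hle v b hb)
  have GsSup : ∀ s : Set K, G (sSup s) = ⨆ x ∈ s, G x := by
    intro s
    refine le_antisymm ?_ (iSup₂_le fun x hx => Gmono (le_sSup hx))
    refine iSup₂_le fun k hk => ?_
    obtain ⟨t, hts, hkt⟩ := hk.1 s hk.2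
    have h1 : r (f k) ≤ G (t.sup id) :=
      hle _ k ⟨hk.1, hkt⟩
    have h2 : G (t.sup id) = t.sup (G ∘ id) :=
      Finset.comp_sup_eq_sup_comp G (fun x y => Gsup2 x y) Gbot
    refine h1.trans (h2.trans_le ?_)
    refine Finset.sup_le fun x hx => ?_
    exact le_iSup₂ (f := fun x _ => G x) x (hts hx)
  have Gtop : G ⊤ = ⊤ := by
    have : r (f ⊤) ≤ G ⊤ := hle ⊤ ⊤ ⟨htop, le_rfl⟩
    rw [map_top, hgc.u_top] at this
    exact top_le_iff.mp this
  have Ginf : ∀ u v : K, G (u ⊓ v) = G u ⊓ G v := by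
    intro u v
    refine le_antisymm (le_inf (Gmono inf_le_left) (Gmono inf_le_right)) ?_
    rw [hG]
    simp only [iSup_inf_eq, inf_iSup_eq]
    refine iSup₂_le fun k hk => iSup₂_le fun k' hk' => ?_
    have : r (f k') ⊓ r (f k) = r (f (k' ⊓ k)) := by
      rw [map_inf, hgc.u_inf]
    rw [this]
    exact hle _ _ ⟨hinf _ _ hk'.1 hk.1, inf_le_inf hk'.2 hk.2⟩
  refine ⟨⟨⟨⟨G, Ginf⟩, Gtop⟩, ?_⟩, ?_⟩
  · intro s
    simp only [InfTopHom.coe_mk, InfHom.coe_mk]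
    rw [GsSup, sSup_image]
  · intro u
    show p (G u) = f u
    have : p (G u) = ⨆ k ∈ S u, p (r (f k)) := by
      rw [hG]
      simp only
      rw [map_iSup]
      refine iSup_congr fun k => ?_
      rw [map_iSup]
    rw [this]
    simp only [pr]
    conv_rhs => rw [hgen u, map_sSup]
    rw [sSup_image]
end

section
/- Let L be a frame. Consider, in the lattice of (order) ideals of L, the principal ideal map a ↦ ↓a (Order.Ideal.principal) and the supremum map σ sending an ideal I to sSup of its underlying set. Then: (1) the pair (σ, principal) forms a Galois connection, i.e. sSup I ≤ a if and only if I ≤ ↓a; (2) σ is surjective, since sSup ↓a = a for all a; (3) σ preserves binary meets: for ideals I and J, sSup (I ⊓ J) = (sSup I) ⊓ (sSup J); (4) the principal ideal map preserves finite joins: ↓⊥ is the bottom ideal and ↓(a ⊔ b) = ↓a ⊔ ↓b in the ideal lattice. (These facts exhibit every locale as a flat sublocale of the coherent locale of ideals of its frame.) -/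
/-- Every locale is a flat sublocale of the coherent locale of ideals of its frame:
for a frame `L`, the supremum map `σ : Ideal L → L` and the principal ideal map
`a ↦ ↓a` form a Galois connection, `σ` is surjective and preserves binary meets,
and the principal ideal map preserves finite joins. -/
theorem stmt7 {L : Type*} [Order.Frame L] :
    -- (1) (σ, principal) is a Galois connection
    GaloisConnection (fun I : Order.Ideal L => sSup (I : Set L)) Order.Ideal.principal ∧
    -- (2) σ is surjective, since sSup ↓a = a
    (∀ a : L, sSup ((Order.Ideal.principal a : Order.Ideal L) : Set L) = a) ∧
    Function.Surjective (fun I : Order.Ideal L => sSup (I : Set L)) ∧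
    -- (3) σ preserves binary meets
    (∀ I J : Order.Ideal L, sSup ((I ⊓ J : Order.Ideal L) : Set L) =
      sSup (I : Set L) ⊓ sSup (J : Set L)) ∧
    -- (4) principal preserves finite joins
    (Order.Ideal.principal (⊥ : L) = ⊥) ∧
    (∀ a b : L, Order.Ideal.principal (a ⊔ b) =
      Order.Ideal.principal a ⊔ Order.Ideal.principal b) := by
  have hsup : ∀ a : L, sSup ((Order.Ideal.principal a : Order.Ideal L) : Set L) = a := by
    intro a
    apply le_antisymm
    · exact sSup_le fun x hx => hx
    · exact le_sSup (by simp)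
  refine ⟨?_, hsup, fun a => ⟨Order.Ideal.principal a, hsup a⟩, ?_, le_antisymm (Order.Ideal.principal_le_iff.2 (Order.Ideal.bot_mem _)) bot_le, ?_⟩
  · intro I a
    constructor
    · intro h x hx
      exact Order.Ideal.mem_principal.2 ((le_sSup hx).trans h)
    · intro h
      exact sSup_le fun x hx => h hx
  · intro I J
    apply le_antisymm
    · exact sSup_le fun x hx => le_inf (le_sSup hx.1) (le_sSup hx.2)
    · rw [sSup_inf_sSup]
      apply iSup_le
      rintro ⟨i, j⟩
      apply iSup_le
      rintro ⟨hi, hj⟩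
      exact le_sSup ⟨I.lower inf_le_left hi, J.lower inf_le_right hj⟩
  · intro a b
    ext x
    rw [SetLike.mem_coe, SetLike.mem_coe, Order.Ideal.mem_principal, Order.Ideal.mem_sup]
    constructor
    · intro h
      exact ⟨a, le_rfl, b, le_rfl, h⟩
    · rintro ⟨i, hi, j, hj, h⟩
      exact h.trans (sup_le_sup hi hj)
end

section
/- Let X be a set and give Ultrafilter X the Stone topology, with basic open sets {U : Ultrafilter X | s ∈ U} for s : Set X. Define φ : Set X → Opens (Ultrafilter X) by φ(s) = {U | s ∈ U} and ψ : Opens (Ultrafilter X) → Set X by ψ(V) = {x : X | pure x ∈ V}. Then: (1) ψ preserves arbitrary unions and finite intersections (including the whole space), i.e. it is a frame homomorphism; (2) the pair (ψ, φ) is a Galois connection: ψ(V) ⊆ s if and only if V ⊆ φ(s); (3) ψ ∘ φ = id, so ψ is surjective; (4) φ preserves finite joins: φ(∅) = ∅ and φ(s ∪ t) = φ(s) ∪ φ(t) for all s, t : Set X. (These facts express that the canonical map from the discrete space X to its space of ultrafilters β(X) is a flat embedding of locales.) -/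
universe u

open TopologicalSpace

/-- The canonical map from the discrete space `X` to its space of ultrafilters `β(X)`
is a flat embedding of locales: the induced map `ψ` on frames of opens (restriction
along `pure`) is a surjective frame homomorphism whose right adjoint `φ` (sending
`s : Set X` to the basic open `{U | s ∈ U}`) preserves finite joins. -/
theorem stmt8 (X : Type u) :
    let φ : Set X → Opens (Ultrafilter X) :=
      fun s => ⟨{U : Ultrafilter X | s ∈ U}, ultrafilter_isOpen_basic s⟩
    let ψ : Opens (Ultrafilter X) → Set X :=
      fun V => {x : X | (pure x : Ultrafilter X) ∈ V}
    -- (1) ψ is a frame homomorphism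
    (∀ 𝒱 : Set (Opens (Ultrafilter X)), ψ (sSup 𝒱) = ⋃ V ∈ 𝒱, ψ V) ∧
    (ψ ⊤ = Set.univ) ∧
    (∀ V W : Opens (Ultrafilter X), ψ (V ⊓ W) = ψ V ∩ ψ W) ∧
    -- (2) (ψ, φ) is a Galois connection
    GaloisConnection ψ φ ∧
    -- (3) ψ ∘ φ = id, so ψ is surjective
    (∀ s : Set X, ψ (φ s) = s) ∧
    Function.Surjective ψ ∧
    -- (4) φ preserves finite joins
    (φ ∅ = ⊥) ∧
    (∀ s t : Set X, φ (s ∪ t) = φ s ⊔ φ t) := by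
  intro φ ψ
  have hψφ : ∀ s : Set X, ψ (φ s) = s := by
    intro s
    ext x
    simp [φ, ψ, Opens.mem_mk, Ultrafilter.mem_pure]
  refine ⟨?_, ?_, ?_, ?_, hψφ, fun s => ⟨φ s, hψφ s⟩, ?_, ?_⟩
  · intro 𝒱
    ext x
    simp [ψ, Opens.mem_sSup]
  · rfl
  · intro V W; rfl
  · intro V s
    constructor
    · intro h U hU
      obtain ⟨t, ht, hUt, htV⟩ :=
        (ultrafilterBasis_is_basis (α := X)).exists_subset_of_mem_open hU V.2
      obtain ⟨t', rfl⟩ := ht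
      have : t' ⊆ s := by
        intro x hx
        exact h (htV (by simpa [Ultrafilter.mem_pure] using hx))
      exact Ultrafilter.mem_coe.mp (Filter.mem_of_superset (Ultrafilter.mem_coe.mpr hUt) this)
    · intro h x hx
      have : (pure x : Ultrafilter X) ∈ φ s := h hx
      simpa [φ, Ultrafilter.mem_pure] using this
  · ext U
    simp [φ]
  · intro s t
    ext U
    simp [φ, Ultrafilter.union_mem_iff]
end

section
/- Let X be a set and give Ultrafilter X the Stone topology, with basic open sets {U : Ultrafilter X | s ∈ U} for s : Set X. The map Φ sending an order ideal I of the powerset lattice Set X to the open set ⋃_{s ∈ I} {U : Ultrafilter X | s ∈ U} is an order isomorphism from the poset of order ideals of Set X to the poset of open subsets of Ultrafilter X, with inverse sending an open set V to the ideal { s : Set X | {U | s ∈ U} ⊆ V }; moreover Φ sends the principal ideal ↓s to the basic open set {U | s ∈ U}. (The frame of opens of β(X) is the frame of ideals of the powerset of X.) -/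
universe u

open TopologicalSpace

section Aux

variable {X : Type u}

/-- basic open set -/
def stmt9Basic (s : Set X) : Set (Ultrafilter X) := {U : Ultrafilter X | s ∈ U}

lemma stmt9Basic_mono {s t : Set X} (h : s ⊆ t) : stmt9Basic s ⊆ stmt9Basic t :=
  fun U hU => U.mem_of_superset hU h

lemma stmt9Basic_subset_iff {s t : Set X} : stmt9Basic s ⊆ stmt9Basic t ↔ s ⊆ t := by
  refine ⟨fun h x hx => ?_, stmt9Basic_mono⟩
  by_contra hxt
  exact hxt (h (show (pure x : Ultrafilter X) ∈ stmt9Basic s from hx))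

lemma stmt9Basic_union (s t : Set X) :
    stmt9Basic (s ∪ t) = stmt9Basic s ∪ stmt9Basic t := by
  ext U; exact Ultrafilter.union_mem_iff

lemma stmt9Basic_empty : stmt9Basic (∅ : Set X) = ∅ := by
  ext U; simp [stmt9Basic, U.empty_notMem]

/-- inverse map yields an ideal -/
def stmt9Inv (V : Opens (Ultrafilter X)) : Order.Ideal (Set X) :=
  Order.IsIdeal.toIdeal (I := {s : Set X | stmt9Basic s ⊆ (V : Set (Ultrafilter X))})
    { IsLowerSet := fun s t hts hs => (stmt9Basic_mono hts).trans hs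
      Nonempty := ⟨∅, by simp [stmt9Basic_empty]⟩
      Directed := fun s hs t ht => ⟨s ∪ t, by
        simp only [Set.mem_setOf_eq, stmt9Basic_union] at *
        exact ⟨Set.union_subset hs ht, Set.subset_union_left, Set.subset_union_right⟩⟩ }

lemma stmt9_key (I : Order.Ideal (Set X)) {s : Set X}
    (h : stmt9Basic s ⊆ ⋃ t ∈ (I : Set (Set X)), stmt9Basic t) : s ∈ I := by
  have hc : IsCompact (stmt9Basic s) :=
    (ultrafilter_isClosed_basic s).isCompact
  obtain ⟨T, hT⟩ := hc.elim_finite_subcover (fun t : I => stmt9Basic (t : Set X))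
    (fun t => ultrafilter_isOpen_basic _)
    (fun U hU => by obtain ⟨t, ht, h2⟩ := Set.mem_iUnion₂.1 (h hU); exact Set.mem_iUnion.2 ⟨⟨t, ht⟩, h2⟩)
  -- T : Finset I
  have hsup : T.sup (fun t : I => (t : Set X)) ∈ I := by
    classical
    refine Finset.sup_induction I.bot_mem (fun a ha b hb => I.sup_mem ha hb) ?_
    exact fun t _ => t.2
  refine I.lower ?_ hsup
  refine stmt9Basic_subset_iff.1 ?_
  intro U hU
  obtain ⟨t, ht, hxt⟩ := Set.mem_iUnion₂.1 (hT hU)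
  exact stmt9Basic_mono (Finset.le_sup (f := fun t : I => (t : Set X)) ht) hxt

end Aux

/-- The frame of opens of `β(X)` is the frame of ideals of the powerset of `X`:
the map sending an order ideal `I` of `Set X` to the open set `⋃ s ∈ I, {U | s ∈ U}`
is an order isomorphism onto the opens of `Ultrafilter X`, with inverse
`V ↦ {s | {U | s ∈ U} ⊆ V}`, and it sends the principal ideal `↓s` to the basic open
`{U | s ∈ U}`. -/
theorem stmt9 (X : Type u) :
    ∃ e : Order.Ideal (Set X) ≃o Opens (Ultrafilter X),
      (∀ I : Order.Ideal (Set X),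
        (e I : Set (Ultrafilter X)) = ⋃ s ∈ (I : Set (Set X)), {U : Ultrafilter X | s ∈ U}) ∧
      (∀ V : Opens (Ultrafilter X),
        ((e.symm V : Order.Ideal (Set X)) : Set (Set X)) =
          {s : Set X | {U : Ultrafilter X | s ∈ U} ⊆ (V : Set (Ultrafilter X))}) ∧
      (∀ s : Set X,
        (e (Order.Ideal.principal s) : Set (Ultrafilter X)) = {U : Ultrafilter X | s ∈ U}) := by
  have fwd : ∀ I : Order.Ideal (Set X), IsOpen (⋃ s ∈ (I : Set (Set X)), stmt9Basic s) :=
    fun I => isOpen_biUnion fun s _ => ultrafilter_isOpen_basic s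
  refine ⟨{ toFun := fun I => ⟨⋃ s ∈ (I : Set (Set X)), stmt9Basic s, fwd I⟩
            invFun := stmt9Inv
            left_inv := ?_
            right_inv := ?_
            map_rel_iff' := ?_ }, ?_, ?_, ?_⟩
  · intro I
    ext s
    constructor
    · exact fun h => stmt9_key I h
    · intro hs
      exact fun U hU => Set.mem_biUnion hs hU
  · intro V
    ext U
    simp only [Opens.coe_mk, Set.mem_iUnion]
    constructor
    · rintro ⟨s, hs, hU⟩
      exact hs hU
    · intro hU
      obtain ⟨s, ⟨t, ht⟩, hUs, hsV⟩ :=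
        ultrafilterBasis_is_basis.exists_subset_of_mem_open hU V.2
      exact ⟨t, by simpa [stmt9Inv, stmt9Basic, ← ht] using hsV, by rwa [← ht] at hUs⟩
  · intro I J
    simp only [Equiv.coe_fn_mk]
    constructor
    · intro h s hs
      exact stmt9_key J (le_trans (fun U hU => Set.mem_biUnion hs hU) h)
    · intro h
      exact Set.iUnion₂_mono' fun s hs => ⟨s, h hs, le_rfl⟩
  · intro I; rfl
  · intro V; rfl
  · intro s
    ext U
    constructor
    · intro h
      obtain ⟨t, ht, hU⟩ := Set.mem_iUnion₂.1 h
      exact U.mem_of_superset hU ht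
    · intro hU
      exact Set.mem_biUnion (Order.Ideal.mem_principal.2 le_rfl) hU
end

section
/- Let C be a small category with finite limits and Psh(C) = Fun(Cᵒᵖ, Type) its presheaf category. Let (D, J) and (D', J') be small sites and 𝓛 = Sheaf(J, Type), 𝓛' = Sheaf(J', Type). Suppose i^* : 𝓛' ⥤ 𝓛 preserves finite limits and has a fully faithful right adjoint i_* : 𝓛 ⥤ 𝓛' (i.e., the geometric morphism i : 𝓛 → 𝓛' is an embedding of topoi). Then for every functor x^* : Psh(C) ⥤ 𝓛 which preserves finite limits and admits a right adjoint, there exists a functor h^* : Psh(C) ⥤ 𝓛' which preserves finite limits, admits a right adjoint, and satisfies h^* ⋙ i^* ≅ x^*. Moreover h^* can be taken to be the pointwise left Kan extension along the Yoneda embedding y : C ⥤ Psh(C) of the composite y ⋙ x^* ⋙ i_* : C ⥤ 𝓛'. (Presheaf topoi over finitely complete categories are injective with respect to embeddings of topoi.) -/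
open CategoryTheory Limits

universe u

set_option linter.unusedSectionVars false

section Aux
variable {C : Type u} [SmallCategory C] [HasFiniteLimits C]

lemma lkeTransfer {ℰ : Type*} [Category.{u} ℰ] {A : C ⥤ ℰ} (L : (Cᵒᵖ ⥤ Type u) ⥤ ℰ)
    (α : A ⟶ yoneda ⋙ L) :
    L.IsLeftKanExtension α ↔
      L.IsLeftKanExtension (α ≫ Functor.whiskerRight uliftYonedaIsoYoneda.{u, u}.inv L) := by
  let eq : (Functor.LeftExtension.mk _ α).IsUniversal ≃ (Functor.LeftExtension.mk _
      (α ≫ Functor.whiskerRight uliftYonedaIsoYoneda.{u, u}.inv L)).IsUniversal :=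
    (IsInitial.isInitialIffObj
      (Functor.leftExtensionEquivalenceOfIso₁ uliftYonedaIsoYoneda.{u, u}.symm A).functor _).trans
    (IsInitial.equivOfIso (StructuredArrow.isoMk (Iso.refl _) (by ext X; simp; exact congrArg (α.app X ≫ ·) (Category.comp_id _))))
  constructor
  · exact fun _ => ⟨⟨eq (Functor.isUniversalOfIsLeftKanExtension _ _)⟩⟩
  · exact fun _ => ⟨⟨eq.symm (Functor.isUniversalOfIsLeftKanExtension _ _)⟩⟩

lemma lkeOfPc {ℰ : Type*} [Category.{u} ℰ] {A : C ⥤ ℰ} [uliftYoneda.{u, u, u}.HasPointwiseLeftKanExtension A] (L : (Cᵒᵖ ⥤ Type u) ⥤ ℰ)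
    (e : A ≅ yoneda ⋙ L) [PreservesColimitsOfSize.{u, u} L] : L.IsLeftKanExtension e.hom := by
  rw [lkeTransfer]
  exact Presheaf.isLeftKanExtension_of_preservesColimits.{u} L
    (e ≪≫ Functor.isoWhiskerRight uliftYonedaIsoYoneda.{u, u}.symm L)

noncomputable def Presheaf.yonedaAdjunction {ℰ : Type*} [Category.{u} ℰ] {A : C ⥤ ℰ}
    [uliftYoneda.{u, u, u}.HasPointwiseLeftKanExtension A]
    (L : (Cᵒᵖ ⥤ Type u) ⥤ ℰ) (α : A ⟶ yoneda ⋙ L) [L.IsLeftKanExtension α] :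
    L ⊣ Presheaf.restrictedULiftYoneda.{u} A :=
  have : L.IsLeftKanExtension (α ≫ Functor.whiskerRight uliftYonedaIsoYoneda.{u, u}.inv L) :=
    (lkeTransfer L α).1 inferInstance
  Presheaf.uliftYonedaAdjunction.{u} L (α ≫ Functor.whiskerRight uliftYonedaIsoYoneda.{u, u}.inv L)

instance pcLan {ℰ : Type*} [Category.{u} ℰ] (A : C ⥤ ℰ) [yoneda.HasPointwiseLeftKanExtension A]
    [uliftYoneda.{u, u, u}.HasPointwiseLeftKanExtension A] :
    PreservesColimitsOfSize.{u, u} (yoneda.leftKanExtension A) :=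
  (Presheaf.yonedaAdjunction _ (yoneda.leftKanExtensionUnit A)).leftAdjoint_preservesColimits

noncomputable def Presheaf.isExtensionAlongYoneda {ℰ : Type*} [Category.{u} ℰ] (A : C ⥤ ℰ)
    [yoneda.HasPointwiseLeftKanExtension A] : yoneda ⋙ yoneda.leftKanExtension A ≅ A :=
  haveI : IsIso (yoneda.leftKanExtensionUnit A) :=
    (Functor.isPointwiseLeftKanExtensionOfIsLeftKanExtension _
    (yoneda.leftKanExtensionUnit A)).isIso_hom
  (asIso (yoneda.leftKanExtensionUnit A)).symm

noncomputable def Presheaf.uniqueExtensionAlongYoneda {ℰ : Type*} [Category.{u} ℰ] {A : C ⥤ ℰ}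
    [yoneda.HasPointwiseLeftKanExtension A] [uliftYoneda.{u, u, u}.HasPointwiseLeftKanExtension A] (L : (Cᵒᵖ ⥤ Type u) ⥤ ℰ)
    (e : A ≅ yoneda ⋙ L) [PreservesColimitsOfSize.{u, u} L] :
    L ≅ yoneda.leftKanExtension A :=
  have := lkeOfPc L e
  Functor.leftKanExtensionUnique _ e.hom _ (yoneda.leftKanExtensionUnit A)

noncomputable def auxPhi (A : C ⥤ Type u) : (Cᵒᵖ ⥤ Type u) ⥤ Type u :=
  (Functor.whiskeringLeft A.Elementsᵒᵖ Cᵒᵖ (Type u)).obj (CategoryOfElements.π A).op ⋙ colim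

@[simps] def auxCocone (A : C ⥤ Type u) (c : C) :
    Cocone ((CategoryOfElements.π A).op ⋙ yoneda.obj c) where
  pt := A.obj c
  ι :=
    { app := fun x => TypeCat.ofHom (fun (f : x.unop.1 ⟶ c) => A.map f x.unop.2)
      naturality := fun x y φ => by
        ext (f : x.unop.1 ⟶ c)
        exact (A.map_comp_apply _ _ _).trans (congrArg (A.map f) φ.unop.2) }

lemma aux_key (A : C ⥤ Type u) (c : C) (j : A.Elementsᵒᵖ) (f : j.unop.1 ⟶ c) :
    colimit.ι ((CategoryOfElements.π A).op ⋙ yoneda.obj c) j f =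
      colimit.ι ((CategoryOfElements.π A).op ⋙ yoneda.obj c)
        (Opposite.op (A.elementsMk c (A.map f j.unop.2))) (𝟙 c) := by
  let φ : Opposite.op (A.elementsMk c (A.map f j.unop.2)) ⟶ j :=
    (CategoryOfElements.homMk j.unop (A.elementsMk c (A.map f j.unop.2)) f rfl).op
  have := ConcreteCategory.congr_hom (colimit.w ((CategoryOfElements.π A).op ⋙ yoneda.obj c) φ) (𝟙 c)
  refine (congrArg (fun g : j.unop.1 ⟶ c => colimit.ι ((CategoryOfElements.π A).op ⋙ yoneda.obj c) j g) (Category.comp_id f).symm).trans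
    (Eq.trans ?_ this)
  rfl

lemma auxDesc_isIso (A : C ⥤ Type u) (c : C) :
    IsIso (colimit.desc ((CategoryOfElements.π A).op ⋙ yoneda.obj c) (auxCocone A c)) := by
  refine ⟨TypeCat.ofHom fun x => colimit.ι ((CategoryOfElements.π A).op ⋙ yoneda.obj c)
    (Opposite.op (A.elementsMk c x)) (𝟙 c), ?_, ?_⟩
  · apply colimit.hom_ext
    intro j
    rw [colimit.ι_desc_assoc, Category.comp_id]
    ext f
    exact (aux_key A c j f).symm
  · ext x
    exact (ConcreteCategory.congr_hom (colimit.ι_desc (auxCocone A c)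
      (Opposite.op (A.elementsMk c x))) (𝟙 c)).trans (ConcreteCategory.congr_hom (A.map_id c) x)

noncomputable def auxPsi (A : C ⥤ Type u) : yoneda ⋙ auxPhi A ⟶ A where
  app c := colimit.desc _ (auxCocone A c)
  naturality {c c'} g := by
    dsimp [auxPhi]
    apply colimit.hom_ext
    intro j
    erw [ι_colimMap_assoc, colimit.ι_desc, colimit.ι_desc_assoc]
    ext f
    exact A.map_comp_apply _ _ _

instance auxPsi_iso (A : C ⥤ Type u) : IsIso (auxPsi A) := by
  have : ∀ c, IsIso ((auxPsi A).app c) := fun c => auxDesc_isIso A c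
  apply NatIso.isIso_of_isIso_app

/-- auxPhi preserves finite limits. -/
lemma auxPhi_preservesFiniteLimits (A : C ⥤ Type u) [PreservesFiniteLimits A] :
    PreservesFiniteLimits (auxPhi A) := by
  have : RepresentablyFlat A := flat_of_preservesFiniteLimits A
  have : IsCofiltered A.Elements :=
    IsCofiltered.of_equivalence (CategoryOfElements.structuredArrowEquivalence A).symm
  have : IsFiltered A.Elementsᵒᵖ := isFiltered_op_of_isCofiltered _
  have h1 : PreservesFiniteLimits
      ((Functor.whiskeringLeft A.Elementsᵒᵖ Cᵒᵖ (Type u)).obj (CategoryOfElements.π A).op) :=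
    ⟨fun J _ _ => inferInstance⟩
  have h2 : PreservesFiniteLimits (colim : (A.Elementsᵒᵖ ⥤ Type u) ⥤ Type u) :=
    inferInstance
  exact comp_preservesFiniteLimits _ _

/-- The Type-valued key lemma. -/
lemma lemT (A : C ⥤ Type u) [PreservesFiniteLimits A] :
    PreservesFiniteLimits (yoneda.leftKanExtension A) := by
  have hP : PreservesFiniteLimits (auxPhi A) := auxPhi_preservesFiniteLimits A
  have hco : PreservesColimitsOfSize.{u, u} (auxPhi A) := by
    have c1 : PreservesColimitsOfSize.{u, u}
        ((Functor.whiskeringLeft A.Elementsᵒᵖ Cᵒᵖ (Type u)).obj (CategoryOfElements.π A).op) :=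
      inferInstance
    have c2 : PreservesColimitsOfSize.{u, u} (colim : (A.Elementsᵒᵖ ⥤ Type u) ⥤ Type u) :=
      inferInstance
    exact comp_preservesColimits _ _
  have e : A ≅ yoneda ⋙ auxPhi A := (asIso (auxPsi A)).symm
  have := lkeOfPc (auxPhi A) e
  exact preservesFiniteLimits_of_natIso
    (Functor.leftKanExtensionUnique (auxPhi A) e.hom
      (yoneda.leftKanExtension A) (yoneda.leftKanExtensionUnit A))

/-- The presheaf-valued lemma. -/
lemma lemP {E : Type u} [SmallCategory E]
    (B : C ⥤ (Eᵒᵖ ⥤ Type u)) [PreservesFiniteLimits B] :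
    PreservesFiniteLimits (yoneda.leftKanExtension B) := by
  constructor
  intro J _ _
  apply preservesLimitsOfShape_of_evaluation
  intro e
  have hBe : PreservesFiniteLimits (B ⋙ (evaluation Eᵒᵖ (Type u)).obj e) :=
    comp_preservesFiniteLimits _ _
  have hLco : PreservesColimitsOfSize.{u, u}
      (yoneda.leftKanExtension B ⋙ (evaluation Eᵒᵖ (Type u)).obj e) := by
    have : PreservesColimitsOfSize.{u, u} (yoneda.leftKanExtension B) := inferInstance
    have : PreservesColimitsOfSize.{u, u} ((evaluation Eᵒᵖ (Type u)).obj e) := inferInstance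
    exact comp_preservesColimits _ _
  have e2 : B ⋙ (evaluation Eᵒᵖ (Type u)).obj e ≅
      yoneda ⋙ (yoneda.leftKanExtension B ⋙ (evaluation Eᵒᵖ (Type u)).obj e) :=
    Functor.isoWhiskerRight (Presheaf.isExtensionAlongYoneda B).symm _ ≪≫ Functor.associator _ _ _
  have := lemT (B ⋙ (evaluation Eᵒᵖ (Type u)).obj e)
  exact preservesLimitsOfShape_of_natIso
    (Presheaf.uniqueExtensionAlongYoneda _ e2 ≪≫
      (Functor.leftKanExtensionUnique _
        (yoneda.leftKanExtensionUnit (B ⋙ (evaluation Eᵒᵖ (Type u)).obj e)) _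
        (yoneda.leftKanExtensionUnit (B ⋙ (evaluation Eᵒᵖ (Type u)).obj e))).symm).symm

end Aux
/-- Presheaf topoi over small finitely complete categories are injective with respect
to embeddings of topoi: given an embedding of topoi `i : 𝓛 → 𝓛'` (inverse image
`i^* = iup` preserving finite limits, fully faithful direct image `i_* = ist`) and a
geometric morphism `x : 𝓛 → Psh(C)` (inverse image `x^* = xup`), there is a geometric
morphism `h : 𝓛' → Psh(C)` with `h^* ⋙ i^* ≅ x^*`; moreover `h^*` can be taken to be
the pointwise left Kan extension along the Yoneda embedding of
`yoneda ⋙ x^* ⋙ i_* : C ⥤ 𝓛'`. -/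
theorem stmt11
    {C : Type u} [SmallCategory C] [HasFiniteLimits C]
    {D : Type u} [SmallCategory D] {J : GrothendieckTopology D}
    {D' : Type u} [SmallCategory D'] {J' : GrothendieckTopology D'}
    (iup : Sheaf J' (Type u) ⥤ Sheaf J (Type u))
    (ist : Sheaf J (Type u) ⥤ Sheaf J' (Type u))
    (adj_i : iup ⊣ ist) [ist.Full] [ist.Faithful] [PreservesFiniteLimits iup]
    (xup : (Cᵒᵖ ⥤ Type u) ⥤ Sheaf J (Type u)) [PreservesFiniteLimits xup]
    (xst : Sheaf J (Type u) ⥤ (Cᵒᵖ ⥤ Type u)) (adj_x : xup ⊣ xst) :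
    ∃ (hup : (Cᵒᵖ ⥤ Type u) ⥤ Sheaf J' (Type u))
      (α : yoneda ⋙ xup ⋙ ist ⟶ yoneda ⋙ hup),
      PreservesFiniteLimits hup ∧ hup.IsLeftAdjoint ∧
      Nonempty (hup ⋙ iup ≅ xup) ∧
      Nonempty (Functor.LeftExtension.IsPointwiseLeftKanExtension
        (Functor.LeftExtension.mk hup α)) := by
  set F : C ⥤ Sheaf J' (Type u) := yoneda ⋙ xup ⋙ ist with hF
  refine ⟨yoneda.leftKanExtension F, yoneda.leftKanExtensionUnit F, ?_, ?_, ?_, ?_⟩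
  · -- PreservesFiniteLimits
    -- Factor through presheaves: hup ≅ (Lan of K) ⋙ sheafification
    set K : C ⥤ (D'ᵒᵖ ⥤ Type u) := F ⋙ sheafToPresheaf J' (Type u) with hK
    have hKfin : PreservesFiniteLimits K := by
      have h1 : PreservesFiniteLimits (yoneda : C ⥤ (Cᵒᵖ ⥤ Type u)) :=
        ⟨fun J _ _ => inferInstance⟩
      have h2 : PreservesFiniteLimits ist :=
        ⟨fun J _ _ => (adj_i.rightAdjoint_preservesLimits).preservesLimitsOfShape⟩
      have h3 : PreservesFiniteLimits (sheafToPresheaf J' (Type u)) :=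
        ⟨fun J _ _ => inferInstance⟩
      have h4 : PreservesFiniteLimits (yoneda ⋙ xup) := comp_preservesFiniteLimits _ _
      have h5 : PreservesFiniteLimits ((yoneda ⋙ xup) ⋙ ist) := comp_preservesFiniteLimits _ _
      exact comp_preservesFiniteLimits ((yoneda ⋙ xup) ⋙ ist) (sheafToPresheaf J' (Type u))
    have hLp : PreservesFiniteLimits (yoneda.leftKanExtension K) := lemP K
    -- the composed functor
    have hcomp : PreservesFiniteLimits
        (yoneda.leftKanExtension K ⋙ presheafToSheaf J' (Type u)) :=
      comp_preservesFiniteLimits _ _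
    -- it is a left Kan extension of F along yoneda
    have hco : PreservesColimitsOfSize.{u, u}
        (yoneda.leftKanExtension K ⋙ presheafToSheaf J' (Type u)) := by
      have : PreservesColimitsOfSize.{u, u} (yoneda.leftKanExtension K) := inferInstance
      have : PreservesColimitsOfSize.{u, u} (presheafToSheaf J' (Type u)) :=
        (sheafificationAdjunction J' (Type u)).leftAdjoint_preservesColimits
      exact comp_preservesColimits _ _
    have ecounit : sheafToPresheaf J' (Type u) ⋙ presheafToSheaf J' (Type u) ≅ 𝟭 _ := by
      exact asIso (sheafificationAdjunction J' (Type u)).counit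
    have e3 : F ≅ yoneda ⋙ (yoneda.leftKanExtension K ⋙ presheafToSheaf J' (Type u)) :=
      (Functor.rightUnitor F).symm ≪≫ Functor.isoWhiskerLeft F ecounit.symm ≪≫
        (Functor.associator F (sheafToPresheaf J' (Type u)) (presheafToSheaf J' (Type u))).symm
        ≪≫ Functor.isoWhiskerRight (Presheaf.isExtensionAlongYoneda K).symm (presheafToSheaf J' (Type u))
        ≪≫ Functor.associator _ _ _
    have := lkeOfPc
      (yoneda.leftKanExtension K ⋙ presheafToSheaf J' (Type u)) e3
    exact preservesFiniteLimits_of_natIso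
      (Functor.leftKanExtensionUnique _ e3.hom
        (yoneda.leftKanExtension F) (yoneda.leftKanExtensionUnit F))
  · -- IsLeftAdjoint
    exact (Presheaf.yonedaAdjunction (yoneda.leftKanExtension F)
      (yoneda.leftKanExtensionUnit F)).isLeftAdjoint
  · -- hup ⋙ iup ≅ xup
    have hco : PreservesColimitsOfSize.{u, u} (yoneda.leftKanExtension F ⋙ iup) := by
      have : PreservesColimitsOfSize.{u, u} (yoneda.leftKanExtension F) := inferInstance
      have : PreservesColimitsOfSize.{u, u} iup := adj_i.leftAdjoint_preservesColimits
      exact comp_preservesColimits _ _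
    have hxco : PreservesColimitsOfSize.{u, u} xup := adj_x.leftAdjoint_preservesColimits
    have ecounit : ist ⋙ iup ≅ 𝟭 _ := asIso adj_i.counit
    have e4 : yoneda ⋙ xup ≅ yoneda ⋙ (yoneda.leftKanExtension F ⋙ iup) :=
      (Functor.rightUnitor (yoneda ⋙ xup)).symm ≪≫
        Functor.isoWhiskerLeft (yoneda ⋙ xup) ecounit.symm ≪≫
        (Functor.associator (yoneda ⋙ xup) ist iup).symm ≪≫
        Functor.isoWhiskerRight ((Functor.associator yoneda xup ist).symm ≪≫
          (Presheaf.isExtensionAlongYoneda F).symm) iup ≪≫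
        Functor.associator _ _ _
    have h5 := lkeOfPc
      (yoneda.leftKanExtension F ⋙ iup) e4
    have h6 : xup.IsLeftKanExtension (𝟙 (yoneda ⋙ xup)) :=
      lkeOfPc xup (Iso.refl _)
    exact ⟨Functor.leftKanExtensionUnique _ e4.hom xup (𝟙 _)⟩
  · -- pointwise
    exact ⟨Functor.isPointwiseLeftKanExtensionOfIsLeftKanExtension _
      (yoneda.leftKanExtensionUnit F)⟩
end

section
/- Let C be a small category, 𝓕 a category, and 𝓖 a cocomplete category. Suppose given adjunctions x^* ⊣ x_* with x^* : Psh(C) ⥤ 𝓕 and x_* : 𝓕 ⥤ Psh(C), and i^* ⊣ i_* with i^* : 𝓖 ⥤ 𝓕 and i_* : 𝓕 ⥤ 𝓖. Let h^* : Psh(C) ⥤ 𝓖 be the pointwise left Kan extension along the Yoneda embedding y : C ⥤ Psh(C) of the composite y ⋙ x^* ⋙ i_* : C ⥤ 𝓖, and let h_* : 𝓖 ⥤ Psh(C) be its right adjoint, given by h_*(g)(c) = Hom_𝓖(i_*(x^*(y c)), g). Then h_*, equipped with the canonical natural transformation x_* ⟶ i_* ⋙ h_* induced by the adjunctions, is a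 left Kan extension of x_* along i_*: for every functor T : 𝓖 ⥤ Psh(C), natural transformations x_* ⟶ i_* ⋙ T correspond bijectively to natural transformations h_* ⟶ T by composition with the canonical transformation. -/
open CategoryTheory Limits Opposite

universe u v w

/-- The restricted Yoneda functor `ℰ ⥤ Cᵒᵖ ⥤ Type v₁` as it stood in Mathlib (Dec 2024). -/
def CategoryTheory.Presheaf.restrictedYoneda {C : Type u} [Category.{v} C] {ℰ : Type w}
    [Category.{v} ℰ] (A : C ⥤ ℰ) : ℰ ⥤ Cᵒᵖ ⥤ Type v :=
  yoneda ⋙ (Functor.whiskeringLeft _ _ (Type v)).obj (Functor.op A)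

namespace Stmt12Aux

variable {C : Type u} [SmallCategory C]
    {𝓕 : Type v} [Category.{u} 𝓕] {𝓖 : Type w} [Category.{u} 𝓖]
    (xup : (Cᵒᵖ ⥤ Type u) ⥤ 𝓕) (xst : 𝓕 ⥤ (Cᵒᵖ ⥤ Type u)) (adj_x : xup ⊣ xst)
    (ist : 𝓕 ⥤ 𝓖)

/-- the universal unit element -/
def eta (c : Cᵒᵖ) : (xst.obj (xup.obj (yoneda.obj c.unop))).obj c :=
  yonedaEquiv (adj_x.unit.app (yoneda.obj c.unop))

lemma app_eta {c : Cᵒᵖ} {F : Cᵒᵖ ⥤ Type u}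
    (β : xst.obj (xup.obj (yoneda.obj c.unop)) ⟶ F) :
    β.app c (eta xup xst adj_x c) = yonedaEquiv (adj_x.unit.app (yoneda.obj c.unop) ≫ β) :=
  yonedaEquiv_comp _ _

lemma eta_map {c : Cᵒᵖ} {f : 𝓕} (ξ : (xst.obj f).obj c) :
    (xst.map ((adj_x.homEquiv (yoneda.obj c.unop) f).symm (yonedaEquiv.symm ξ))).app c
      (eta xup xst adj_x c) = ξ := by
  rw [app_eta, ← Adjunction.homEquiv_unit, Equiv.apply_symm_apply, Equiv.apply_symm_apply]

lemma eta_naturality {c c' : Cᵒᵖ} (u : c ⟶ c') :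
    (xst.map (xup.map (yoneda.map u.unop))).app c' (eta xup xst adj_x c') =
      (xst.obj (xup.obj (yoneda.obj c.unop))).map u (eta xup xst adj_x c) := by
  have h2 : (xst.obj (xup.obj (yoneda.obj c.unop))).map u (eta xup xst adj_x c) =
      yonedaEquiv (yoneda.map u.unop ≫ adj_x.unit.app (yoneda.obj c.unop)) :=
    yonedaEquiv_naturality' _ _
  rw [app_eta, h2]
  congr 1
  exact (adj_x.unit.naturality (yoneda.map u.unop)).symm

variable (T : 𝓖 ⥤ (Cᵒᵖ ⥤ Type u))

/-- inverse construction -/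
def back (σ : xst ⟶ ist ⋙ T) :
    Presheaf.restrictedYoneda (yoneda ⋙ xup ⋙ ist) ⟶ T where
  app g :=
    { app := fun c => TypeCat.ofHom fun φ => (T.map φ).app c
        ((σ.app (xup.obj (yoneda.obj c.unop))).app c (eta xup xst adj_x c))
      naturality := by
        intro c c' u
        ext φ
        dsimp [Presheaf.restrictedYoneda] at φ ⊢
        simp only [TypeCat.Fun.toFun_apply, types_comp_apply, TypeCat.ofHom_apply]
        have hA := ConcreteCategory.congr_hom (NatTrans.congr_app
          (σ.naturality (xup.map (yoneda.map u.unop))) c') (eta xup xst adj_x c')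
        have hB := eta_naturality xup xst adj_x u
        have hC := ConcreteCategory.congr_hom ((σ.app (xup.obj (yoneda.obj c.unop))).naturality u)
          (eta xup xst adj_x c)
        have hD := ConcreteCategory.congr_hom ((T.map φ).naturality u)
          ((σ.app (xup.obj (yoneda.obj c.unop))).app c (eta xup xst adj_x c))
        dsimp at hA hB hC hD
        rw [T.map_comp]
        dsimp
        rw [← hA, hB, hC, hD] }
  naturality := by
    intro g g' m
    ext c φ
    dsimp [Presheaf.restrictedYoneda] at φ ⊢
    simp only [TypeCat.Fun.toFun_apply, types_comp_apply, TypeCat.ofHom_apply]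
    rw [T.map_comp]
    rfl


variable (α : xst ⟶ ist ⋙ Presheaf.restrictedYoneda (yoneda ⋙ xup ⋙ ist))

lemma forward_back (hα : ∀ (f : 𝓕) (c : C) (ξ : (xst.obj f).obj (Opposite.op c)),
      (α.app f).app (Opposite.op c) ξ =
        ist.map ((adj_x.homEquiv (yoneda.obj c) f).symm (yonedaEquiv.symm ξ)))
    (σ : xst ⟶ ist ⋙ T) :
    α ≫ CategoryTheory.Functor.whiskerLeft ist (back xup xst adj_x ist T σ) = σ := by
  ext f c ξ
  obtain ⟨c⟩ := c
  have h1 : (α.app f).app (op c) ξ =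
      ist.map ((adj_x.homEquiv (yoneda.obj c) f).symm (yonedaEquiv.symm ξ)) := hα f c ξ
  have hA := ConcreteCategory.congr_hom (NatTrans.congr_app
    (σ.naturality ((adj_x.homEquiv (yoneda.obj c) f).symm (yonedaEquiv.symm ξ))) (op c))
    (eta xup xst adj_x (op c))
  have hB := eta_map xup xst adj_x ξ
  dsimp at hA ⊢
  rw [h1]
  dsimp [back]
  rw [← hA, hB]

lemma back_forward (hα : ∀ (f : 𝓕) (c : C) (ξ : (xst.obj f).obj (Opposite.op c)),
      (α.app f).app (Opposite.op c) ξ =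
        ist.map ((adj_x.homEquiv (yoneda.obj c) f).symm (yonedaEquiv.symm ξ)))
    (τ : Presheaf.restrictedYoneda (yoneda ⋙ xup ⋙ ist) ⟶ T) :
    back xup xst adj_x ist T (α ≫ CategoryTheory.Functor.whiskerLeft ist τ) = τ := by
  ext g c φ
  obtain ⟨c⟩ := c
  simp only [back, NatTrans.comp_app, Functor.whiskerLeft_app, types_comp_apply]
  dsimp [back, Presheaf.restrictedYoneda] at φ ⊢
  have h1 : (α.app (xup.obj (yoneda.obj c))).app (op c) (eta xup xst adj_x (op c)) =
      𝟙 (ist.obj (xup.obj (yoneda.obj c))) := by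
    rw [hα _ c _]
    dsimp [eta]
    rw [Equiv.symm_apply_apply, ← Adjunction.homEquiv_id adj_x (yoneda.obj c),
      Equiv.symm_apply_apply, ist.map_id]
  simp only [TypeCat.Fun.toFun_apply]
  erw [h1]
  have h2 := ConcreteCategory.congr_hom (NatTrans.congr_app (τ.naturality φ) (op c))
    (𝟙 (ist.obj (xup.obj (yoneda.obj c))))
  dsimp [Presheaf.restrictedYoneda] at h2
  exact h2.symm.trans (congrArg (fun x => (τ.app g).app (op c) x) (Category.id_comp φ))

end Stmt12Aux

/-- Given adjunctions `x^* ⊣ x_*` (with `x^* : Psh(C) ⥤ 𝓕`) and `i^* ⊣ i_*`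
(with `i^* : 𝓖 ⥤ 𝓕`, `𝓖` cocomplete), let `h_* : 𝓖 ⥤ Psh(C)` be the restricted
Yoneda functor of `yoneda ⋙ x^* ⋙ i_* : C ⥤ 𝓖`, i.e. `h_*(g)(c) = 𝓖(i_* x^* (y c), g)`
(the right adjoint of the pointwise left Kan extension of `yoneda ⋙ x^* ⋙ i_*` along
the Yoneda embedding).  Then `h_*`, equipped with the canonical natural transformation
`α : x_* ⟶ i_* ⋙ h_*` induced by the adjunctions, is a left Kan extension of `x_*`
along `i_*`: for every `T : 𝓖 ⥤ Psh(C)`, composition with `α` is a bijection from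
natural transformations `h_* ⟶ T` to natural transformations `x_* ⟶ i_* ⋙ T`. -/
theorem stmt12 {C : Type u} [SmallCategory C]
    {𝓕 : Type v} [Category.{u} 𝓕] {𝓖 : Type w} [Category.{u} 𝓖] [HasColimits 𝓖]
    (xup : (Cᵒᵖ ⥤ Type u) ⥤ 𝓕) (xst : 𝓕 ⥤ (Cᵒᵖ ⥤ Type u)) (adj_x : xup ⊣ xst)
    (iup : 𝓖 ⥤ 𝓕) (ist : 𝓕 ⥤ 𝓖) (adj_i : iup ⊣ ist)
    (α : xst ⟶ ist ⋙ Presheaf.restrictedYoneda (yoneda ⋙ xup ⋙ ist))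
    (hα : ∀ (f : 𝓕) (c : C) (ξ : (xst.obj f).obj (Opposite.op c)),
      (α.app f).app (Opposite.op c) ξ =
        ist.map ((adj_x.homEquiv (yoneda.obj c) f).symm (yonedaEquiv.symm ξ))) :
    ∀ T : 𝓖 ⥤ (Cᵒᵖ ⥤ Type u),
      Function.Bijective
        (fun τ : (Presheaf.restrictedYoneda (yoneda ⋙ xup ⋙ ist) ⟶ T) =>
          α ≫ CategoryTheory.Functor.whiskerLeft ist τ) := by
  intro T
  exact Function.bijective_iff_has_inverse.mpr
    ⟨Stmt12Aux.back xup xst adj_x ist T,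
     fun τ => Stmt12Aux.back_forward xup xst adj_x ist T α hα τ,
     fun σ => Stmt12Aux.forward_back xup xst adj_x ist T α hα σ⟩
end
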